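/- Let Λ = [[λ₁,λ₂],[λ₂,λ₁]] be real with λ₁ ≥ λ₂ + 1 and λ₂ ≥ 0, and set ρ = (log²(λ₁+λ₂) + log²(λ₁−λ₂))^{1/2}. Then: (i) every continuously differentiable curve Z : [0,t₀] → Ĥ₂ with Z(0) = iI and Z(t₀) = iΛ has symplectic length ∫₀^{t₀} (tr(Y(t)^{-1} Z′(t) Y(t)^{-1} conj(Z′(t))))^{1/2} dt ≥ ρ, where Y(t) = Im Z(t); (ii) the curve Z(t) = i·[[( (λ₁+λ₂)^{t/t₀} + (λ₁−λ₂)^{t/t₀} )/2, ( (λ₁+λ₂)^{t/t₀} − (λ₁−λ₂)^{t/t₀} )/2],[( (λ₁+λ₂)^{t/t₀} − (λ₁−λ₂)^{t/t₀} )/2, ( (λ₁+λ₂)^{t/t₀} + (λ₁−λ₂)^{t/t₀} )/2]] joins iI to iΛ inside Ĥ₂ and has symplectic length exactly ρ. -/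

import Mathlib

open Matrix Complex

noncomputable section

abbrev Mat2 : Type := Matrix (Fin 2) (Fin 2) ℂ
abbrev Mat2R : Type := Matrix (Fin 2) (Fin 2) ℝ
abbrev Mat4 : Type := Matrix (Fin 2 ⊕ Fin 2) (Fin 2 ⊕ Fin 2) ℝ

/-- `q = [[0,1],[1,0]]`. -/
def qR : Mat2R := !![0, 1; 1, 0]

/-- `J = [[0, I₂],[−I₂, 0]]` (4×4). -/
def Jmat : Mat4 := Matrix.fromBlocks 0 1 (-1) 0

/-- `Q = diag(q, q)` (4×4). -/
def Qmat : Mat4 := Matrix.fromBlocks qR 0 0 qR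

/-- `Ω₂ = Sp(4,ℝ) = {M : ᵗM J M = J}`. -/
def Omega2 : Set Mat4 := {M | Mᵀ * Jmat * M = Jmat}

/-- The new Siegel upper half space `Ĥ₂`: bi-symmetric `Z = [[τ,z],[z,τ]]` with `Im τ > |Im z|`. -/
def Hhat : Set Mat2 :=
  {Z | Z 1 1 = Z 0 0 ∧ Z 1 0 = Z 0 1 ∧ |(Z 0 1).im| < (Z 0 0).im}

/-- The action `M<Z> = (AZ+B)(CZ+D)⁻¹` of a real 4×4 matrix in 2×2 blocks on `Z ∈ ℂ^{2×2}`. -/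
def act (M : Mat4) (Z : Mat2) : Mat2 :=
  (M.toBlocks₁₁.map Complex.ofReal * Z + M.toBlocks₁₂.map Complex.ofReal) *
    (M.toBlocks₂₁.map Complex.ofReal * Z + M.toBlocks₂₂.map Complex.ofReal)⁻¹

/-- `Ω̂₂ = {M ∈ Ω₂ : M<Z> ∈ Ĥ₂ for all Z ∈ Ĥ₂}`. -/
def OmegaHat : Set Mat4 := {M | M ∈ Omega2 ∧ ∀ Z ∈ Hhat, act M Z ∈ Hhat}

/-- Entrywise complex conjugation of a matrix. -/
def conjM (Z : Mat2) : Mat2 := Z.map (starRingEnd ℂ)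

/-- The imaginary part `Y = Im Z` of a complex matrix, as a real matrix. -/
def imPart (Z : Mat2) : Mat2R := Z.map Complex.im

/-- The symplectic quadratic form `tr(Y⁻¹ H Y⁻¹ conj H)` at the point `Z`
(with `Y = Im Z`), evaluated on the tangent `H`. -/
def metricForm (Z H : Mat2) : ℂ :=
  (((imPart Z)⁻¹).map Complex.ofReal * H * ((imPart Z)⁻¹).map Complex.ofReal *
    conjM H).trace

/-- The bi-symmetric matrix curve `t ↦ [[f t, g t],[g t, f t]]`. -/
def mk (f g : ℝ → ℂ) (t : ℝ) : Mat2 := !![f t, g t; g t, f t]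

/-- Diagonal entry of the candidate geodesic from `iI` to `iΛ`. -/
def geoT (l₁ l₂ t₀ t : ℝ) : ℂ :=
  Complex.I * Complex.ofReal (((l₁ + l₂) ^ (t / t₀) + (l₁ - l₂) ^ (t / t₀)) / 2)

/-- Off-diagonal entry of the candidate geodesic from `iI` to `iΛ`. -/
def geoZ (l₁ l₂ t₀ t : ℝ) : ℂ :=
  Complex.I * Complex.ofReal (((l₁ + l₂) ^ (t / t₀) - (l₁ - l₂) ^ (t / t₀)) / 2)

/-- Derivative of `geoT`. -/
def geoT' (l₁ l₂ t₀ t : ℝ) : ℂ :=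
  Complex.I * Complex.ofReal ((Real.log (l₁ + l₂) * (l₁ + l₂) ^ (t / t₀) +
    Real.log (l₁ - l₂) * (l₁ - l₂) ^ (t / t₀)) / (2 * t₀))

/-- Derivative of `geoZ`. -/
def geoZ' (l₁ l₂ t₀ t : ℝ) : ℂ :=
  Complex.I * Complex.ofReal ((Real.log (l₁ + l₂) * (l₁ + l₂) ^ (t / t₀) -
    Real.log (l₁ - l₂) * (l₁ - l₂) ^ (t / t₀)) / (2 * t₀))


section Aux
open intervalIntegral

lemma inv_bisym (b c : ℝ) (h : |c| < b) :
    (!![b, c; c, b] : Mat2R)⁻¹ =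
      !![b / (b^2 - c^2), -c / (b^2 - c^2); -c / (b^2 - c^2), b / (b^2 - c^2)] := by
  have hb : 0 < b := lt_of_le_of_lt (abs_nonneg _) h
  have hd : b^2 - c^2 ≠ 0 := by nlinarith [abs_lt.mp h |>.1, abs_lt.mp h |>.2]
  apply Matrix.inv_eq_right_inv
  ext i j
  fin_cases i <;> fin_cases j <;>
    simp [Matrix.mul_apply, Fin.sum_univ_two] <;> field_simp <;> ring

lemma metric_re (τ z τ' z' : ℂ) (h : |z.im| < τ.im) :
    (metricForm !![τ, z; z, τ] !![τ', z'; z', τ']).re =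
      ‖τ' + z'‖ ^ 2 / (τ.im + z.im) ^ 2 +
      ‖τ' - z'‖ ^ 2 / (τ.im - z.im) ^ 2 := by
  have h1 : 0 < τ.im + z.im := by cases abs_lt.mp h; linarith
  have h2 : 0 < τ.im - z.im := by cases abs_lt.mp h; linarith
  have himp : imPart !![τ, z; z, τ] = !![τ.im, z.im; z.im, τ.im] := by
    ext i j; fin_cases i <;> fin_cases j <;> rfl
  have hd : τ.im^2 - z.im^2 ≠ 0 := by nlinarith
  rw [metricForm, himp, inv_bisym _ _ h]
  simp only [Matrix.trace_fin_two, Matrix.mul_apply, Fin.sum_univ_two, conjM,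
    Matrix.map_apply, Matrix.of_apply, Complex.sq_norm, Complex.normSq_apply,
    Matrix.cons_val', Matrix.cons_val_zero, Matrix.cons_val_one, Matrix.head_cons,
    Matrix.head_fin_const, Matrix.empty_val', Matrix.cons_val_fin_one,
    Complex.add_re, Complex.mul_re, Complex.mul_im, Complex.add_im,
    Complex.ofReal_re, Complex.ofReal_im, Complex.conj_re, Complex.conj_im,
    Complex.sub_re, Complex.sub_im]
  field_simp
  ring

lemma cont_on_im {w : ℝ → ℂ} {s : Set ℝ} (h : ContinuousOn w s) :
    ContinuousOn (fun t => (w t).im) s := Complex.continuous_im.comp_continuousOn h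

lemma log_int (t₀ : ℝ) (ht₀ : 0 < t₀) (w w' : ℝ → ℂ)
    (hD : ∀ t ∈ Set.Icc (0:ℝ) t₀, HasDerivWithinAt w (w' t) (Set.Icc (0:ℝ) t₀) t)
    (hw' : ContinuousOn w' (Set.Icc 0 t₀))
    (hpos : ∀ t ∈ Set.Icc (0:ℝ) t₀, 0 < (w t).im) :
    Real.log ((w t₀).im) - Real.log ((w 0).im) ≤
      ∫ t in (0:ℝ)..t₀, ‖w' t‖ / (w t).im := by
  have hwc : ContinuousOn w (Set.Icc 0 t₀) := fun t ht => (hD t ht).continuousWithinAt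
  have hgc : ContinuousOn (fun t => (w' t).im / (w t).im) (Set.Icc 0 t₀) :=
    (cont_on_im hw').div (cont_on_im hwc) (fun t ht => (hpos t ht).ne')
  have hAc : ContinuousOn (fun t => ‖w' t‖ / (w t).im) (Set.Icc 0 t₀) :=
    (continuous_norm.comp_continuousOn hw').div (cont_on_im hwc)
      (fun t ht => (hpos t ht).ne')
  have huIcc : Set.uIcc (0:ℝ) t₀ = Set.Icc 0 t₀ := Set.uIcc_of_le ht₀.le
  have hg_int : IntervalIntegrable (fun t => (w' t).im / (w t).im) MeasureTheory.volume 0 t₀ :=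
    (huIcc ▸ hgc).intervalIntegrable
  have hA_int : IntervalIntegrable (fun t => ‖w' t‖ / (w t).im)
      MeasureTheory.volume 0 t₀ := (huIcc ▸ hAc).intervalIntegrable
  have key : ∫ t in (0:ℝ)..t₀, (w' t).im / (w t).im =
      Real.log ((w t₀).im) - Real.log ((w 0).im) := by
    apply integral_eq_sub_of_hasDeriv_right_of_le ht₀.le
    · exact ((cont_on_im hwc).log (fun t ht => (hpos t ht).ne'))
    · intro x hx
      have hmem : Set.Icc (0:ℝ) t₀ ∈ nhds x := Icc_mem_nhds hx.1 hx.2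
      have hdw : HasDerivAt w (w' x) x :=
        (hD x (Set.Ioo_subset_Icc_self hx)).hasDerivAt hmem
      have hdim : HasDerivAt (fun t => (w t).im) ((w' x).im) x :=
        Complex.imCLM.hasFDerivAt.comp_hasDerivAt x hdw
      exact (hdim.log (hpos x (Set.Ioo_subset_Icc_self hx)).ne').hasDerivWithinAt
    · exact hg_int
  rw [← key]
  apply integral_mono_on ht₀.le hg_int hA_int
  intro x hx
  gcongr
  · exact (hpos x hx).le
  · exact Complex.im_le_norm (w' x)

lemma norm_step (t₀ : ℝ) (ht₀ : 0 < t₀) (A B : ℝ → ℝ)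
    (hA : ContinuousOn A (Set.Icc 0 t₀)) (hB : ContinuousOn B (Set.Icc 0 t₀))
    (la lb : ℝ) (hla : 0 ≤ la) (hlb : 0 ≤ lb)
    (hIA : la ≤ ∫ t in (0:ℝ)..t₀, A t) (hIB : lb ≤ ∫ t in (0:ℝ)..t₀, B t) :
    Real.sqrt (la^2 + lb^2) ≤ ∫ t in (0:ℝ)..t₀, Real.sqrt (A t^2 + B t^2) := by
  set f : ℝ → ℂ := fun t => (A t : ℂ) + (B t) * Complex.I with hf
  have huIcc : Set.uIcc (0:ℝ) t₀ = Set.Icc 0 t₀ := Set.uIcc_of_le ht₀.le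
  have hAC : IntervalIntegrable (fun t => (A t : ℂ)) MeasureTheory.volume 0 t₀ :=
    (huIcc ▸ (Complex.continuous_ofReal.comp_continuousOn hA)).intervalIntegrable
  have hBC : IntervalIntegrable (fun t => (B t : ℂ) * Complex.I) MeasureTheory.volume 0 t₀ :=
    ((huIcc ▸ (Complex.continuous_ofReal.comp_continuousOn hB)).intervalIntegrable).mul_const _
  have hint : ∫ t in (0:ℝ)..t₀, f t =
      ((∫ t in (0:ℝ)..t₀, A t : ℝ) : ℂ) + ((∫ t in (0:ℝ)..t₀, B t : ℝ) : ℂ) * Complex.I := by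
    rw [hf, integral_add hAC hBC, integral_mul_const, integral_ofReal, integral_ofReal]
  have heq : (fun t => Real.sqrt (A t^2 + B t^2)) = fun t => ‖f t‖ := by
    funext t; rw [hf, Complex.norm_add_mul_I]
  rw [heq]
  calc Real.sqrt (la^2 + lb^2)
      ≤ Real.sqrt ((∫ t in (0:ℝ)..t₀, A t)^2 + (∫ t in (0:ℝ)..t₀, B t)^2) :=
        Real.sqrt_le_sqrt (add_le_add (pow_le_pow_left₀ hla hIA 2) (pow_le_pow_left₀ hlb hIB 2))
    _ = ‖∫ t in (0:ℝ)..t₀, f t‖ := by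
        rw [hint, Complex.norm_add_mul_I]
    _ ≤ ∫ t in (0:ℝ)..t₀, ‖f t‖ := norm_integral_le_integral_norm ht₀.le

lemma rpow_deriv (a t₀ : ℝ) (ha : 0 < a) (t : ℝ) :
    HasDerivAt (fun t => a ^ (t / t₀)) (Real.log a * a ^ (t / t₀) / t₀) t := by
  have h1 : HasDerivAt (fun t : ℝ => t / t₀) (1 / t₀) t := by
    simpa using (hasDerivAt_id t).div_const t₀
  have := (Real.hasStrictDerivAt_const_rpow ha (t / t₀)).hasDerivAt.comp t h1
  refine this.congr_deriv ?_
  ring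

lemma geo_deriv (l₁ l₂ t₀ : ℝ) (h1 : 0 < l₁ + l₂) (h2 : 0 < l₁ - l₂) (t : ℝ) :
    HasDerivAt (geoT l₁ l₂ t₀) (geoT' l₁ l₂ t₀ t) t ∧
    HasDerivAt (geoZ l₁ l₂ t₀) (geoZ' l₁ l₂ t₀ t) t := by
  have da := rpow_deriv (l₁ + l₂) t₀ h1 t
  have db := rpow_deriv (l₁ - l₂) t₀ h2 t
  constructor
  · have := (((da.add db).div_const 2).ofReal_comp).const_mul Complex.I
    refine this.congr_deriv ?_; symm
    unfold geoT'
    congr 1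
    push_cast
    ring
  · have := (((da.sub db).div_const 2).ofReal_comp).const_mul Complex.I
    refine this.congr_deriv ?_; symm
    unfold geoZ'
    congr 1
    push_cast
    ring

end Aux

/-- (i) every C¹ curve in `Ĥ₂` from `iI` to `iΛ` has symplectic
length at least `ρ = √(log²(λ₁+λ₂) + log²(λ₁−λ₂))`; (ii) the explicit curve
`geoT/geoZ` joins `iI` to `iΛ` in `Ĥ₂` and has symplectic length exactly `ρ`. -/
theorem stmt_13 (l₁ l₂ : ℝ) (hl₂ : 0 ≤ l₂) (hl₁ : l₂ + 1 ≤ l₁)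
    (t₀ : ℝ) (ht₀ : 0 < t₀) :
    (∀ τ z τ' z' : ℝ → ℂ,
      (∀ t ∈ Set.Icc (0 : ℝ) t₀, mk τ z t ∈ Hhat) →
      (∀ t ∈ Set.Icc (0 : ℝ) t₀, HasDerivWithinAt τ (τ' t) (Set.Icc (0 : ℝ) t₀) t ∧
        HasDerivWithinAt z (z' t) (Set.Icc (0 : ℝ) t₀) t) →
      ContinuousOn τ' (Set.Icc (0 : ℝ) t₀) → ContinuousOn z' (Set.Icc (0 : ℝ) t₀) →
      τ 0 = Complex.I → z 0 = 0 →
      τ t₀ = Complex.I * (l₁ : ℂ) → z t₀ = Complex.I * (l₂ : ℂ) →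
      Real.sqrt (Real.log (l₁ + l₂) ^ 2 + Real.log (l₁ - l₂) ^ 2) ≤
        ∫ t in (0 : ℝ)..t₀, Real.sqrt ((metricForm (mk τ z t) (mk τ' z' t)).re)) ∧
    ((∀ t ∈ Set.Icc (0 : ℝ) t₀, mk (geoT l₁ l₂ t₀) (geoZ l₁ l₂ t₀) t ∈ Hhat) ∧
      geoT l₁ l₂ t₀ 0 = Complex.I ∧ geoZ l₁ l₂ t₀ 0 = 0 ∧
      geoT l₁ l₂ t₀ t₀ = Complex.I * (l₁ : ℂ) ∧
      geoZ l₁ l₂ t₀ t₀ = Complex.I * (l₂ : ℂ) ∧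
      (∀ t ∈ Set.Icc (0 : ℝ) t₀,
        HasDerivWithinAt (geoT l₁ l₂ t₀) (geoT' l₁ l₂ t₀ t) (Set.Icc (0 : ℝ) t₀) t ∧
        HasDerivWithinAt (geoZ l₁ l₂ t₀) (geoZ' l₁ l₂ t₀ t) (Set.Icc (0 : ℝ) t₀) t) ∧
      (∫ t in (0 : ℝ)..t₀, Real.sqrt
          ((metricForm (mk (geoT l₁ l₂ t₀) (geoZ l₁ l₂ t₀) t)
            (mk (geoT' l₁ l₂ t₀) (geoZ' l₁ l₂ t₀) t)).re)) =
        Real.sqrt (Real.log (l₁ + l₂) ^ 2 + Real.log (l₁ - l₂) ^ 2)) := by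
  
  have ha0 : (0:ℝ) < l₁ + l₂ := by linarith
  have hb0 : (0:ℝ) < l₁ - l₂ := by linarith
  have ha1 : (1:ℝ) ≤ l₁ + l₂ := by linarith
  have hb1 : (1:ℝ) ≤ l₁ - l₂ := by linarith
  have hla : 0 ≤ Real.log (l₁ + l₂) := Real.log_nonneg ha1
  have hlb : 0 ≤ Real.log (l₁ - l₂) := Real.log_nonneg hb1
  constructor
  · -- part (i)
    intro τ z τ' z' hH hD hτ'c hz'c h0τ h0z h1τ h1z
    set u : ℝ → ℂ := fun t => τ t + z t with hu
    set v : ℝ → ℂ := fun t => τ t - z t with hv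
    set u' : ℝ → ℂ := fun t => τ' t + z' t with hu'
    set v' : ℝ → ℂ := fun t => τ' t - z' t with hv'
    have hHm : ∀ t ∈ Set.Icc (0:ℝ) t₀, |(z t).im| < (τ t).im := by
      intro t ht
      have := (hH t ht).2.2
      simpa [_root_.mk, Hhat] using this
    have hupos : ∀ t ∈ Set.Icc (0:ℝ) t₀, 0 < (u t).im := by
      intro t ht
      have := abs_lt.mp (hHm t ht)
      simp only [hu, Complex.add_im]; linarith [this.1, this.2]
    have hvpos : ∀ t ∈ Set.Icc (0:ℝ) t₀, 0 < (v t).im := by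
      intro t ht
      have := abs_lt.mp (hHm t ht)
      simp only [hv, Complex.sub_im]; linarith [this.1, this.2]
    have hDu : ∀ t ∈ Set.Icc (0:ℝ) t₀, HasDerivWithinAt u (u' t) (Set.Icc (0:ℝ) t₀) t :=
      fun t ht => (hD t ht).1.add (hD t ht).2
    have hDv : ∀ t ∈ Set.Icc (0:ℝ) t₀, HasDerivWithinAt v (v' t) (Set.Icc (0:ℝ) t₀) t :=
      fun t ht => (hD t ht).1.sub (hD t ht).2
    have hu'c : ContinuousOn u' (Set.Icc 0 t₀) := hτ'c.add hz'c
    have hv'c : ContinuousOn v' (Set.Icc 0 t₀) := hτ'c.sub hz'c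
    have hucont : ContinuousOn u (Set.Icc 0 t₀) := fun t ht => (hDu t ht).continuousWithinAt
    have hvcont : ContinuousOn v (Set.Icc 0 t₀) := fun t ht => (hDv t ht).continuousWithinAt
    have hIA := log_int t₀ ht₀ u u' hDu hu'c hupos
    have hIB := log_int t₀ ht₀ v v' hDv hv'c hvpos
    have hu0 : (u 0).im = 1 := by simp [hu, h0τ, h0z]
    have hut : (u t₀).im = l₁ + l₂ := by simp [hu, h1τ, h1z]
    have hv0 : (v 0).im = 1 := by simp [hv, h0τ, h0z]
    have hvt : (v t₀).im = l₁ - l₂ := by simp [hv, h1τ, h1z]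
    rw [hu0, hut, Real.log_one, sub_zero] at hIA
    rw [hv0, hvt, Real.log_one, sub_zero] at hIB
    have hAc : ContinuousOn (fun t => ‖u' t‖ / (u t).im) (Set.Icc 0 t₀) :=
      (continuous_norm.comp_continuousOn hu'c).div (cont_on_im hucont)
        (fun t ht => (hupos t ht).ne')
    have hBc : ContinuousOn (fun t => ‖v' t‖ / (v t).im) (Set.Icc 0 t₀) :=
      (continuous_norm.comp_continuousOn hv'c).div (cont_on_im hvcont)
        (fun t ht => (hvpos t ht).ne')
    have main := norm_step t₀ ht₀ _ _ hAc hBc _ _ hla hlb hIA hIB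
    refine main.trans_eq ?_
    apply intervalIntegral.integral_congr
    intro t ht
    rw [Set.uIcc_of_le ht₀.le] at ht
    show Real.sqrt ((‖u' t‖ / (u t).im) ^ 2 + (‖v' t‖ / (v t).im) ^ 2)
      = Real.sqrt ((metricForm (mk τ z t) (mk τ' z' t)).re)
    rw [show mk τ z t = !![τ t, z t; z t, τ t] from rfl,
        show mk τ' z' t = !![τ' t, z' t; z' t, τ' t] from rfl,
        metric_re (τ t) (z t) (τ' t) (z' t) (hHm t ht)]
    simp only [hu, hu', hv, hv', Complex.add_im, Complex.sub_im, div_pow]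
  · -- part (ii)
    have hsa : ∀ t : ℝ, 0 < (l₁ + l₂) ^ (t / t₀) := fun t => Real.rpow_pos_of_pos ha0 _
    have hsb : ∀ t : ℝ, 0 < (l₁ - l₂) ^ (t / t₀) := fun t => Real.rpow_pos_of_pos hb0 _
    have himT : ∀ t : ℝ, (geoT l₁ l₂ t₀ t).im =
        ((l₁ + l₂) ^ (t / t₀) + (l₁ - l₂) ^ (t / t₀)) / 2 := by
      intro t; simp [geoT]
    have himZ : ∀ t : ℝ, (geoZ l₁ l₂ t₀ t).im =
        ((l₁ + l₂) ^ (t / t₀) - (l₁ - l₂) ^ (t / t₀)) / 2 := by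
      intro t; simp [geoZ]
    have hmem : ∀ t : ℝ, |(geoZ l₁ l₂ t₀ t).im| < (geoT l₁ l₂ t₀ t).im := by
      intro t
      rw [himT, himZ, abs_lt]
      constructor <;> nlinarith [hsa t, hsb t]
    refine ⟨?_, ?_, ?_, ?_, ?_, ?_, ?_⟩
    · intro t _
      exact ⟨rfl, rfl, by simpa [_root_.mk] using hmem t⟩
    · simp [geoT, zero_div, Real.rpow_zero]
    · simp [geoZ, zero_div, Real.rpow_zero]
    · rw [geoT, div_self ht₀.ne', Real.rpow_one, Real.rpow_one]
      push_cast; ring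
    · rw [geoZ, div_self ht₀.ne', Real.rpow_one, Real.rpow_one]
      push_cast; ring
    · intro t _
      exact ⟨(geo_deriv l₁ l₂ t₀ ha0 hb0 t).1.hasDerivWithinAt,
        (geo_deriv l₁ l₂ t₀ ha0 hb0 t).2.hasDerivWithinAt⟩
    · have hconst : ∀ t : ℝ,
          Real.sqrt ((metricForm (mk (geoT l₁ l₂ t₀) (geoZ l₁ l₂ t₀) t)
            (mk (geoT' l₁ l₂ t₀) (geoZ' l₁ l₂ t₀) t)).re) =
          Real.sqrt (Real.log (l₁ + l₂) ^ 2 + Real.log (l₁ - l₂) ^ 2) / t₀ := by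
        intro t
        set A := (l₁ + l₂) ^ (t / t₀) with hA
        set B := (l₁ - l₂) ^ (t / t₀) with hB
        have e1 : geoT' l₁ l₂ t₀ t + geoZ' l₁ l₂ t₀ t =
            Complex.I * ((Real.log (l₁ + l₂) * A / t₀ : ℝ) : ℂ) := by
          rw [geoT', geoZ']; push_cast; field_simp; ring
        have e2 : geoT' l₁ l₂ t₀ t - geoZ' l₁ l₂ t₀ t =
            Complex.I * ((Real.log (l₁ - l₂) * B / t₀ : ℝ) : ℂ) := by
          rw [geoT', geoZ']; push_cast; field_simp; ring
        have habs : ∀ x : ℝ, ‖Complex.I * (x : ℂ)‖ = |x| := by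
          intro x; simp
        rw [show mk (geoT l₁ l₂ t₀) (geoZ l₁ l₂ t₀) t =
            !![geoT l₁ l₂ t₀ t, geoZ l₁ l₂ t₀ t; geoZ l₁ l₂ t₀ t, geoT l₁ l₂ t₀ t] from rfl,
          show mk (geoT' l₁ l₂ t₀) (geoZ' l₁ l₂ t₀) t =
            !![geoT' l₁ l₂ t₀ t, geoZ' l₁ l₂ t₀ t; geoZ' l₁ l₂ t₀ t, geoT' l₁ l₂ t₀ t] from rfl,
          metric_re _ _ _ _ (hmem t), e1, e2, habs, habs, himT, himZ]
        have h1 : |Real.log (l₁ + l₂) * A / t₀| = Real.log (l₁ + l₂) * A / t₀ :=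
          abs_of_nonneg (by positivity)
        have h2 : |Real.log (l₁ - l₂) * B / t₀| = Real.log (l₁ - l₂) * B / t₀ :=
          abs_of_nonneg (by positivity)
        rw [h1, h2]
        have harith : (Real.log (l₁ + l₂) * A / t₀)^2 / (((A + B)/2 + (A - B)/2))^2 +
            (Real.log (l₁ - l₂) * B / t₀)^2 / (((A + B)/2 - (A - B)/2))^2 =
            (Real.log (l₁ + l₂)^2 + Real.log (l₁ - l₂)^2) / t₀^2 := by
          have hA0 : 0 < A := hsa t; have hB0 : 0 < B := hsb t
          rw [show (A + B)/2 + (A - B)/2 = A by ring, show (A + B)/2 - (A - B)/2 = B by ring]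
          field_simp
        rw [harith, Real.sqrt_div (by positivity), Real.sqrt_sq ht₀.le]
      rw [intervalIntegral.integral_congr (g := fun _ =>
        Real.sqrt (Real.log (l₁ + l₂) ^ 2 + Real.log (l₁ - l₂) ^ 2) / t₀) (fun t _ => hconst t)]
      rw [intervalIntegral.integral_const, smul_eq_mul]
      field_simp
      ring
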